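/- Let A = [[0,1],[-1,3]] and B = [[-1,-1],[5,4]], two matrices in SL(2,ℤ) (integer 2×2 matrices of determinant 1), and let G₀ be the subgroup of SL(2,ℤ) generated by A and B. Then G₀ is a free group, and every matrix M in G₀ with M ≠ I has trace different from 2. -/

import Mathlib

namespace SL2FreeAux

abbrev SL2 := Matrix.SpecialLinearGroup (Fin 2) ℤ

def Am : SL2 := ⟨!![0, 1; -1, 3], by norm_num [Matrix.det_fin_two_of]⟩
def Bm : SL2 := ⟨!![-1, -1; 5, 4], by norm_num [Matrix.det_fin_two_of]⟩
def Am' : SL2 := ⟨!![3, -1; 1, 0], by norm_num [Matrix.det_fin_two_of]⟩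
def Bm' : SL2 := ⟨!![4, 1; -5, -1], by norm_num [Matrix.det_fin_two_of]⟩

lemma Am_inv : Am⁻¹ = Am' := by
  apply inv_eq_of_mul_eq_one_right
  apply Subtype.ext
  show (!![0, 1; -1, 3] : Matrix (Fin 2) (Fin 2) ℤ) * !![3, -1; 1, 0] = _
  rw [Matrix.mul_fin_two]
  norm_num [Matrix.SpecialLinearGroup.coe_one, ← Matrix.one_fin_two]

lemma Bm_inv : Bm⁻¹ = Bm' := by
  apply inv_eq_of_mul_eq_one_right
  apply Subtype.ext
  show (!![-1, -1; 5, 4] : Matrix (Fin 2) (Fin 2) ℤ) * !![4, 1; -5, -1] = _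
  rw [Matrix.mul_fin_two]
  norm_num [Matrix.SpecialLinearGroup.coe_one, ← Matrix.one_fin_two]

def gen : Bool → SL2 := fun b => cond b Bm Am

/-- the matrix of a letter -/
def matOf (p : Bool × Bool) : SL2 := cond p.2 (gen p.1) (gen p.1)⁻¹

lemma coe_matOf_ft : (matOf (false, true)).1 = !![0, 1; -1, 3] := rfl
lemma coe_matOf_ff : (matOf (false, false)).1 = !![3, -1; 1, 0] := by
  show (Am⁻¹).1 = _; rw [Am_inv]; rfl
lemma coe_matOf_tt : (matOf (true, true)).1 = !![-1, -1; 5, 4] := rfl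
lemma coe_matOf_tf : (matOf (true, false)).1 = !![4, 1; -5, -1] := by
  show (Bm⁻¹).1 = _; rw [Bm_inv]; rfl

/-- cones -/
def Kp : Bool × Bool → ℤ → ℤ → Prop
  | (false, true), x, y => (0 ≤ x ∧ 5*x ≤ 2*y) ∨ (x ≤ 0 ∧ 2*y ≤ 5*x)
  | (false, false), x, y => (0 ≤ y ∧ 5*y ≤ 2*x) ∨ (y ≤ 0 ∧ 2*x ≤ 5*y)
  | (true, true), x, y => (0 ≤ x ∧ 2*y ≤ -(7*x) ∧ -(5*x) ≤ y) ∨ (x ≤ 0 ∧ -(7*x) ≤ 2*y ∧ y ≤ -(5*x))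
  | (true, false), x, y => (0 ≤ x ∧ -(7*x) ≤ 5*y ∧ y ≤ -x) ∨ (x ≤ 0 ∧ 5*y ≤ -(7*x) ∧ -x ≤ y)

def K (g : Bool × Bool) (x y : ℤ) : Prop := Kp g x y ∧ ¬(x = 0 ∧ y = 0)

def ColInv (g : Bool × Bool) (M : SL2) : Prop :=
  K g (M.1 0 0) (M.1 1 0) ∧ K g (M.1 0 1) (M.1 1 1)

lemma step (g h : Bool × Bool) (hgh : h ≠ (g.1, !g.2)) (M : SL2) (hM : ColInv h M) :
    ColInv g (matOf g * M) := by
  obtain ⟨⟨h1, n1⟩, h2, n2⟩ := hM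
  have hcoe : (matOf g * M).1 = (matOf g).1 * M.1 := rfl
  have hMe : M.1 = !![M.1 0 0, M.1 0 1; M.1 1 0, M.1 1 1] := Matrix.eta_fin_two M.1
  obtain ⟨gb, gs⟩ := g
  obtain ⟨hb, hs⟩ := h
  have hcol : ∀ i j, (matOf (gb, gs) * M).1 i j =
      ((matOf (gb, gs)).1 * !![M.1 0 0, M.1 0 1; M.1 1 0, M.1 1 1]) i j := by
    intro i j; rw [hcoe, ← hMe]
  rcases gb <;> rcases gs <;> rcases hb <;> rcases hs <;>
    first
    | exact absurd rfl hgh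
    | (simp only [coe_matOf_ff, coe_matOf_ft, coe_matOf_tf, coe_matOf_tt,
        Matrix.mul_fin_two] at hcol
       simp only [Kp] at h1 h2
       refine ⟨⟨?_, ?_⟩, ?_, ?_⟩ <;>
         simp only [hcol, Matrix.of_apply, Matrix.cons_val', Matrix.cons_val_zero,
           Matrix.cons_val_one, Matrix.head_cons, Matrix.head_fin_const, Matrix.empty_val',
           Matrix.cons_val_fin_one, Kp] <;>
         omega)

lemma colInv_matOf (g : Bool × Bool) : ColInv g (matOf g) := by
  rcases g with ⟨gb, gs⟩
  rcases gb <;> rcases gs <;>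
    simp only [ColInv, K, Kp, coe_matOf_ff, coe_matOf_ft, coe_matOf_tf, coe_matOf_tt,
      Matrix.of_apply, Matrix.cons_val', Matrix.cons_val_zero, Matrix.cons_val_one,
      Matrix.head_cons, Matrix.head_fin_const, Matrix.empty_val', Matrix.cons_val_fin_one] <;>
    omega

def prodL (L : List (Bool × Bool)) : SL2 := (L.map matOf).prod

lemma cols : ∀ (t : List (Bool × Bool)) (g : Bool × Bool),
    List.Chain' (fun p q => q ≠ (p.1, !p.2)) (g :: t) → ColInv g (prodL (g :: t)) := by
  intro t
  induction t with
  | nil =>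
    intro g _
    have : prodL [g] = matOf g := by simp [prodL]
    rw [this]; exact colInv_matOf g
  | cons h t ih =>
    intro g hch
    unfold List.Chain' at hch; rw [List.isChain_cons_cons] at hch
    have : prodL (g :: h :: t) = matOf g * prodL (h :: t) := by simp [prodL]
    rw [this]
    exact step g h hch.1 _ (ih h hch.2)

lemma ne_one_of_colInv (g : Bool × Bool) (M : SL2) (h : ColInv g M) : M ≠ 1 := by
  rintro rfl
  obtain ⟨⟨h1, n1⟩, h2, n2⟩ := h
  have e : ((1 : SL2) : Matrix (Fin 2) (Fin 2) ℤ) = !![1,0;0,1] := by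
    rw [Matrix.SpecialLinearGroup.coe_one, Matrix.one_fin_two]
  rw [e] at h1 h2
  rcases g with ⟨gb, gs⟩
  rcases gb <;> rcases gs <;>
    simp only [Kp, Matrix.of_apply, Matrix.cons_val', Matrix.cons_val_zero, Matrix.cons_val_one,
      Matrix.head_cons, Matrix.head_fin_const, Matrix.empty_val', Matrix.cons_val_fin_one]
      at h1 h2 <;>
    omega

def phi : FreeGroup Bool →* SL2 := FreeGroup.lift gen

lemma phi_eq (x : FreeGroup Bool) : phi x = prodL x.toWord := by
  conv_lhs => rw [← FreeGroup.mk_toWord (x := x)]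
  show FreeGroup.lift gen (FreeGroup.mk x.toWord) = _
  rw [FreeGroup.lift_mk]
  rfl

lemma exists_of_not_chain' {α : Type*} {R : α → α → Prop} :
    ∀ {l : List α}, ¬ l.Chain' R → ∃ l1 a b l2, l = l1 ++ a :: b :: l2 ∧ ¬ R a b := by
  intro l
  induction l with
  | nil => intro h; exact absurd List.isChain_nil h
  | cons a l ih =>
    cases l with
    | nil => intro h; exact absurd (List.isChain_singleton a) h
    | cons b t =>
      intro h
      unfold List.Chain' at h; rw [List.isChain_cons_cons] at h
      by_cases hR : R a b
      · have h2 : ¬ (b :: t).Chain' R := fun hc => h ⟨hR, hc⟩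
        obtain ⟨l1, u, v, l2, heq, huv⟩ := ih h2
        exact ⟨a :: l1, u, v, l2, by simp [heq], huv⟩
      · exact ⟨[], a, b, t, rfl, hR⟩

lemma chain'_toWord (x : FreeGroup Bool) :
    x.toWord.Chain' (fun p q => q ≠ (p.1, !p.2)) := by
  by_contra hc
  obtain ⟨l1, u, v, l2, heq, huv⟩ := exists_of_not_chain' hc
  push_neg at huv
  obtain ⟨u1, u2⟩ := u
  subst huv
  dsimp only at heq
  exact FreeGroup.reduce.not (α := Bool) (p := False) (L₂ := l1) (L₃ := l2) (x := u1) (b := u2)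
    (by rw [FreeGroup.reduce_toWord]; exact heq)

lemma SL2_inv_coe (N : SL2) :
    ((N⁻¹ : SL2) : Matrix (Fin 2) (Fin 2) ℤ) = !![N.1 1 1, -N.1 0 1; -N.1 1 0, N.1 0 0] := by
  rw [Matrix.SpecialLinearGroup.SL2_inv_expl N]
  rfl

lemma final (f k : Bool × Bool) (hfk : k ≠ f) (a b c d : ℤ)
    (hdet : a * d - b * c = 1) (htr : a + d = 2)
    (h1 : K f a c) (h2 : K f b d) (h3 : K k d (-c)) (h4 : K k (-b) a) : False := by
  obtain ⟨p1, n1⟩ := h1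
  obtain ⟨p2, n2⟩ := h2
  obtain ⟨p3, n3⟩ := h3
  obtain ⟨p4, n4⟩ := h4
  rcases f with ⟨fb, fs⟩
  rcases k with ⟨kb, ks⟩
  rcases fb <;> rcases fs <;> rcases kb <;> rcases ks <;>
    first
      | exact hfk rfl
      | (simp only [Kp] at p1 p2 p3 p4
         rcases p1 with p1|p1 <;> rcases p2 with p2|p2 <;> rcases p3 with p3|p3 <;>
           rcases p4 with p4|p4 <;> omega)

lemma trace_ne_two : ∀ (n : ℕ) (x : FreeGroup Bool), x.toWord.length ≤ n → phi x ≠ 1 →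
    Matrix.trace ((phi x : SL2) : Matrix (Fin 2) (Fin 2) ℤ) ≠ 2 := by
  intro n
  induction n with
  | zero =>
    intro x hlen hne
    exfalso
    apply hne
    have hx : x = 1 := by
      rwa [← FreeGroup.toWord_eq_nil_iff, ← List.length_eq_zero_iff, ← Nat.le_zero]
    rw [hx, map_one]
  | succ n ih =>
    intro x hlen hne htr
    have hxne : x ≠ 1 := fun h => hne (by rw [h, map_one])
    have hLne : x.toWord ≠ [] := fun h => hxne (FreeGroup.toWord_eq_nil_iff.mp h)
    obtain ⟨g, t, hgt⟩ := List.exists_cons_of_ne_nil hLne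
    set q := x.toWord.getLast hLne with hqdef
    have hsplit : x.toWord.dropLast ++ [q] = x.toWord := List.dropLast_append_getLast hLne
    by_cases hcyc : q = (g.1, !g.2)
    · -- conjugation case
      have htne : t ≠ [] := by
        intro h
        have hx1 : x.toWord = [g] := by rw [hgt, h]
        have hqg : q = g := by
          have h2 := hsplit
          rw [hx1] at h2
          simpa using h2
        rw [hqg] at hcyc
        have := congrArg Prod.snd hcyc
        simp at this
      have hS : x.toWord.dropLast = g :: t.dropLast := by
        rw [hgt]
        exact List.dropLast_cons_of_ne_nil htne
      have hx : x = FreeGroup.mk ([g] ++ (t.dropLast ++ [q])) := by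
        conv_lhs => rw [← FreeGroup.mk_toWord (x := x), ← hsplit, hS]
        rfl
      have hminv : FreeGroup.mk [q] = (FreeGroup.mk [g])⁻¹ := by
        rw [FreeGroup.inv_mk]
        congr 1
        rcases g with ⟨g1, g2⟩
        simp [FreeGroup.invRev, hcyc]
      have hxuy : x = FreeGroup.mk [g] * FreeGroup.mk t.dropLast * (FreeGroup.mk [g])⁻¹ := by
        rw [← hminv, FreeGroup.mul_mk, FreeGroup.mul_mk, hx, List.append_assoc]
      set u := FreeGroup.mk [g]
      set y := FreeGroup.mk t.dropLast
      have hy1 : phi y ≠ 1 := by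
        intro h
        apply hne
        rw [hxuy, map_mul, map_mul, map_inv, h, mul_one, mul_inv_cancel]
      have hylen : y.toWord.length ≤ n := by
        have h1 : y.toWord.length ≤ t.dropLast.length := FreeGroup.norm_mk_le
        have h2 : t.dropLast.length = t.length - 1 := List.length_dropLast (xs := t)
        have h3 : x.toWord.length = t.length + 1 := by rw [hgt]; simp
        omega
      apply ih y hylen hy1
      have hconj : Matrix.trace ((phi x : SL2) : Matrix (Fin 2) (Fin 2) ℤ) =
          Matrix.trace ((phi y : SL2) : Matrix (Fin 2) (Fin 2) ℤ) := by
        rw [hxuy, map_mul, map_mul, map_inv]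
        rw [Matrix.SpecialLinearGroup.coe_mul, Matrix.SpecialLinearGroup.coe_mul]
        rw [Matrix.trace_mul_cycle]
        rw [← Matrix.SpecialLinearGroup.coe_mul, inv_mul_cancel,
          Matrix.SpecialLinearGroup.coe_one, Matrix.one_mul]
      rw [← hconj]
      exact htr
    · -- cyclically reduced case
      have hch : x.toWord.Chain' (fun p q => q ≠ (p.1, !p.2)) := chain'_toWord x
      have hcol1 : ColInv g (phi x) := by
        rw [phi_eq, hgt]
        exact cols t g (hgt ▸ hch)
      have h5 : (x⁻¹).toWord = (q.1, !q.2) :: FreeGroup.invRev x.toWord.dropLast := by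
        rw [FreeGroup.toWord_inv]
        conv_lhs => rw [← hsplit]
        simp [FreeGroup.invRev]
      have hcol2 : ColInv (q.1, !q.2) (phi x⁻¹) := by
        rw [phi_eq, h5]
        apply cols
        rw [← h5]
        exact chain'_toWord x⁻¹
      have hkf : (q.1, !q.2) ≠ g := by
        intro h
        apply hcyc
        rw [← h]
        simp
      have hdet : (phi x).1 0 0 * (phi x).1 1 1 - (phi x).1 0 1 * (phi x).1 1 0 = 1 := by
        have := (phi x).2
        rwa [Matrix.det_fin_two] at this
      have htr2 : (phi x).1 0 0 + (phi x).1 1 1 = 2 := by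
        rwa [Matrix.trace_fin_two] at htr
      rw [map_inv] at hcol2
      rw [ColInv, SL2_inv_coe] at hcol2
      simp only [Matrix.of_apply, Matrix.cons_val', Matrix.cons_val_zero, Matrix.cons_val_one,
        Matrix.head_cons, Matrix.head_fin_const, Matrix.empty_val', Matrix.cons_val_fin_one]
        at hcol2
      exact final g (q.1, !q.2) hkf ((phi x).1 0 0) ((phi x).1 0 1) ((phi x).1 1 0)
        ((phi x).1 1 1) hdet htr2 hcol1.1 hcol1.2 hcol2.1 hcol2.2

lemma gen_range : Set.range gen = {Am, Bm} := by
  ext z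
  constructor
  · rintro ⟨b, rfl⟩
    cases b
    · exact Or.inl rfl
    · exact Or.inr rfl
  · rintro (rfl | rfl)
    · exact ⟨false, rfl⟩
    · exact ⟨true, rfl⟩

lemma phi_injective : Function.Injective phi := by
  rw [injective_iff_map_eq_one]
  intro x hx
  by_contra hxne
  have hLne : x.toWord ≠ [] := fun h => hxne (FreeGroup.toWord_eq_nil_iff.mp h)
  obtain ⟨g, t, hgt⟩ := List.exists_cons_of_ne_nil hLne
  have hcol : ColInv g (phi x) := by
    rw [phi_eq, hgt]
    exact cols t g (hgt ▸ chain'_toWord x)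
  exact ne_one_of_colInv g (phi x) hcol hx

lemma phi_range : phi.range = Subgroup.closure {Am, Bm} := by
  have : phi.range = Subgroup.closure (Set.range gen) := FreeGroup.range_lift_eq_closure
  rw [this, gen_range]

end SL2FreeAux

open SL2FreeAux in
/-- The subgroup `G₀` of `SL(2,ℤ)` generated by `A = [[0,1],[-1,3]]` and
`B = [[-1,-1],[5,4]]` is a free group, and every `M ∈ G₀` with `M ≠ 1`
has trace different from `2`. -/
theorem free_subgroup_SL2Z_trace_ne_two
    (A B : Matrix.SpecialLinearGroup (Fin 2) ℤ)
    (hA : (A : Matrix (Fin 2) (Fin 2) ℤ) = !![0, 1; -1, 3])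
    (hB : (B : Matrix (Fin 2) (Fin 2) ℤ) = !![-1, -1; 5, 4]) :
    IsFreeGroup (Subgroup.closure ({A, B} : Set (Matrix.SpecialLinearGroup (Fin 2) ℤ))) ∧
    ∀ M ∈ Subgroup.closure ({A, B} : Set (Matrix.SpecialLinearGroup (Fin 2) ℤ)),
      M ≠ 1 → Matrix.trace (M : Matrix (Fin 2) (Fin 2) ℤ) ≠ 2 := by
  have hA' : A = Am := Subtype.ext (by rw [hA]; rfl)
  have hB' : B = Bm := Subtype.ext (by rw [hB]; rfl)
  subst hA'
  subst hB'
  constructor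
  · exact IsFreeGroup.ofMulEquiv
      ((MonoidHom.ofInjective phi_injective).trans (MulEquiv.subgroupCongr phi_range))
  · intro M hM hMne htr2
    have hMr : M ∈ phi.range := by rw [phi_range]; exact hM
    obtain ⟨x, hx⟩ := hMr
    exact trace_ne_two x.toWord.length x le_rfl (by rw [hx]; exact hMne)
      (by rw [hx]; exact htr2)
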